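/- The set of imprimitive 2-qudit gates is an open dense subset of the unitary group U(d²) of ℂᵈ ⊗ ℂᵈ. -/

import Mathlib

open Matrix Kronecker Complex

/-- The tensor (Kronecker) product of two vectors of `ℂᵈ`, as a vector of `ℂᵈ ⊗ ℂᵈ`. -/
def tensorVec {d : ℕ} (x y : Fin d → ℂ) : Fin d × Fin d → ℂ := fun p => x p.1 * y p.2

/-- A vector of `ℂᵈ ⊗ ℂᵈ` is decomposable if it is a tensor product of two vectors. -/
def Decomposable {d : ℕ} (z : Fin d × Fin d → ℂ) : Prop := ∃ u v : Fin d → ℂ, z = tensorVec u v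

/-- A gate on `ℂᵈ ⊗ ℂᵈ` is primitive if it maps decomposable tensors to decomposable tensors. -/
def Primitive {d : ℕ} (V : Matrix (Fin d × Fin d) (Fin d × Fin d) ℂ) : Prop :=
  ∀ x y : Fin d → ℂ, Decomposable (V.mulVec (tensorVec x y))

/-! ### Auxiliary lemmas -/

/-- A vector of `ℂᵈ ⊗ ℂᵈ` is decomposable iff, viewed as a `d × d` matrix, all its `2 × 2`
minors vanish. -/
lemma decomposable_iff {d : ℕ} (z : Fin d × Fin d → ℂ) :
    Decomposable z ↔ ∀ i k j l, z (i, j) * z (k, l) = z (i, l) * z (k, j) := by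
  constructor
  · rintro ⟨u, v, rfl⟩ i k j l
    simp only [tensorVec]; ring
  · intro h
    by_cases hz : z = 0
    · exact ⟨0, 0, by funext p; simp [hz, tensorVec]⟩
    · obtain ⟨p, hp⟩ := Function.ne_iff.mp hz
      refine ⟨fun i => z (i, p.2), fun j => z (p.1, j) / z (p.1, p.2), ?_⟩
      funext q
      have hp' : z (p.1, p.2) ≠ 0 := by simpa using hp
      have h1 := h q.1 p.1 q.2 p.2
      simp only [tensorVec]
      field_simp
      linear_combination h1

/-- The set of decomposable vectors is closed. -/
lemma isClosed_decomposable {d : ℕ} : IsClosed {z : Fin d × Fin d → ℂ | Decomposable z} := by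
  have : {z : Fin d × Fin d → ℂ | Decomposable z} =
      ⋂ i, ⋂ k, ⋂ j, ⋂ l, {z : Fin d × Fin d → ℂ | z (i, j) * z (k, l) = z (i, l) * z (k, j)} := by
    ext z; simp [decomposable_iff, Set.mem_iInter]
  rw [this]
  exact isClosed_iInter fun i => isClosed_iInter fun k => isClosed_iInter fun j =>
    isClosed_iInter fun l => isClosed_eq (by fun_prop) (by fun_prop)

lemma vecMulVec_mul' {n : Type*} [Fintype n] (x y p q : n → ℂ) :
    vecMulVec x y * vecMulVec p q = (y ⬝ᵥ p) • vecMulVec x q := by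
  ext i j
  simp only [Matrix.mul_apply, vecMulVec_apply, Matrix.smul_apply, dotProduct, smul_eq_mul,
    Finset.sum_mul]
  exact Finset.sum_congr rfl fun k _ => by ring

lemma vecMulVec_mulVec' {n : Type*} [Fintype n] (x y w : n → ℂ) :
    vecMulVec x y *ᵥ w = (y ⬝ᵥ w) • x := by
  funext i
  simp only [Matrix.mulVec, vecMulVec_apply, dotProduct, Pi.smul_apply, smul_eq_mul,
    Finset.sum_mul]
  exact Finset.sum_congr rfl fun k _ => by ring

lemma vecMulVec_conjT {n : Type*} (x y : n → ℂ) :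
    (vecMulVec x y)ᴴ = vecMulVec (star y) (star x) := by
  ext i j
  simp [vecMulVec_apply, conjTranspose_apply, mul_comm]

lemma star_tensor_dot {d : ℕ} (u v p q : Fin d → ℂ) :
    star (tensorVec u v) ⬝ᵥ tensorVec p q = (star u ⬝ᵥ p) * (star v ⬝ᵥ q) := by
  simp only [dotProduct, Pi.star_apply, tensorVec, Finset.sum_mul_sum, Fintype.sum_prod_type]
  exact Finset.sum_congr rfl fun i _ => Finset.sum_congr rfl fun j _ => by
    simp [star_mul']; ring

/-- Given a nonzero vector `u` in dimension `≥ 2`, produce a unit vector orthogonal to it,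
with an explicit pair of indices witnessing linear independence. -/
lemma exists_perp {d : ℕ} (hd : 2 ≤ d) (u : Fin d → ℂ) (hu : u ≠ 0) :
    ∃ w : Fin d → ℂ, star u ⬝ᵥ w = 0 ∧ star w ⬝ᵥ u = 0 ∧ star w ⬝ᵥ w = 1 ∧
      ∃ i k : Fin d, u i * w k - u k * w i ≠ 0 := by
  obtain ⟨j₀, hj₀⟩ := Function.ne_iff.mp hu
  simp only [Pi.zero_apply] at hj₀
  obtain ⟨k₀, hk₀⟩ := Fintype.exists_ne_of_one_lt_card (by rw [Fintype.card_fin]; omega) j₀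
  set n : ℝ := normSq (u j₀) + normSq (u k₀) with hn_def
  have hn : 0 < n := by
    have := normSq_pos.mpr hj₀
    have h2 := normSq_nonneg (u k₀)
    rw [hn_def]; positivity
  set w0 : Fin d → ℂ := fun i =>
    if i = j₀ then starRingEnd ℂ (u k₀) else if i = k₀ then -starRingEnd ℂ (u j₀) else 0 with hw0
  have sum2 : ∀ f : Fin d → ℂ, (∀ i, i ≠ j₀ → i ≠ k₀ → f i = 0) → ∑ i, f i = f j₀ + f k₀ := by
    intro f hf
    rw [show (f j₀ + f k₀ : ℂ) = ∑ i ∈ ({j₀, k₀} : Finset (Fin d)), f i by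
      rw [Finset.sum_pair (Ne.symm hk₀)]]
    exact (Finset.sum_subset (Finset.subset_univ _) fun x _ hx => by
      simp only [Finset.mem_insert, Finset.mem_singleton, not_or] at hx
      exact hf x hx.1 hx.2).symm
  have hw0j : w0 j₀ = starRingEnd ℂ (u k₀) := by simp [hw0]
  have hw0k : w0 k₀ = -starRingEnd ℂ (u j₀) := by simp [hw0, hk₀]
  have hvan : ∀ i, i ≠ j₀ → i ≠ k₀ → w0 i = 0 := fun i h1 h2 => by simp [hw0, h1, h2]
  have h1 : star u ⬝ᵥ w0 = 0 := by
    rw [show star u ⬝ᵥ w0 = ∑ i, starRingEnd ℂ (u i) * w0 i from rfl,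
      sum2 _ (fun i ha hb => by rw [hvan i ha hb, mul_zero]), hw0j, hw0k]
    ring
  have h2 : star w0 ⬝ᵥ u = 0 := by
    rw [show star w0 ⬝ᵥ u = ∑ i, starRingEnd ℂ (w0 i) * u i from rfl,
      sum2 _ (fun i ha hb => by rw [hvan i ha hb, map_zero, zero_mul]), hw0j, hw0k]
    simp; ring
  have h3 : star w0 ⬝ᵥ w0 = (n : ℂ) := by
    rw [show star w0 ⬝ᵥ w0 = ∑ i, starRingEnd ℂ (w0 i) * w0 i from rfl,
      sum2 _ (fun i ha hb => by rw [hvan i ha hb, mul_zero]), hw0j, hw0k]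
    simp only [map_neg, RingHomCompTriple.comp_apply, RingHom.id_apply, hn_def]
    push_cast
    linear_combination Complex.mul_conj (u j₀) + Complex.mul_conj (u k₀)
  have h4 : u j₀ * w0 k₀ - u k₀ * w0 j₀ = -(n : ℂ) := by
    rw [hw0j, hw0k, hn_def]
    push_cast
    linear_combination -Complex.mul_conj (u j₀) - Complex.mul_conj (u k₀)
  set μ : ℂ := (((Real.sqrt n)⁻¹ : ℝ) : ℂ) with hμ
  have hsqrt_ne : Real.sqrt n ≠ 0 := by positivity
  have hμ_ne : μ ≠ 0 := by
    simp [hμ, hsqrt_ne]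
  have hμs : star μ = μ := by rw [hμ, star_def, conj_ofReal]
  have hμμn : μ * μ * (n : ℂ) = 1 := by
    rw [hμ]
    rw [show ((((Real.sqrt n)⁻¹ : ℝ) : ℂ)) * (((Real.sqrt n)⁻¹ : ℝ) : ℂ) * (n:ℂ)
        = ((((Real.sqrt n)⁻¹ * (Real.sqrt n)⁻¹ * n : ℝ)) : ℂ) by push_cast; ring]
    rw [show (Real.sqrt n)⁻¹ * (Real.sqrt n)⁻¹ * n = 1 by
      field_simp; rw [Real.sq_sqrt hn.le]]
    norm_num
  refine ⟨μ • w0, ?_, ?_, ?_, j₀, k₀, ?_⟩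
  · rw [dotProduct_smul, h1, smul_zero]
  · rw [star_smul, smul_dotProduct, h2, smul_zero]
  · rw [star_smul, smul_dotProduct, dotProduct_smul, h3, hμs]
    rw [smul_eq_mul, smul_eq_mul, ← mul_assoc]
    exact hμμn
  · simp only [Pi.smul_apply, smul_eq_mul]
    rw [show u j₀ * (μ * w0 k₀) - u k₀ * (μ * w0 j₀) = μ * (u j₀ * w0 k₀ - u k₀ * w0 j₀) by ring,
      h4]
    simp only [mul_neg, ne_eq, neg_eq_zero, mul_eq_zero, not_or]
    exact ⟨hμ_ne, by exact_mod_cast hn.ne'⟩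

/-- A genuine combination `c • (u ⊗ v) + s • (p ⊗ q)` of two "independent" product vectors is
not decomposable. -/
lemma not_decomposable_combo {d : ℕ} (u v p q : Fin d → ℂ) (c s : ℂ) (hc : c ≠ 0) (hs : s ≠ 0)
    {i k j l : Fin d} (h1 : u i * p k - u k * p i ≠ 0) (h2 : v j * q l - v l * q j ≠ 0) :
    ¬ Decomposable (c • tensorVec u v + s • tensorVec p q) := by
  rw [decomposable_iff]
  push_neg
  refine ⟨i, k, j, l, fun H => ?_⟩
  apply mul_ne_zero (mul_ne_zero hc hs) (mul_ne_zero h1 h2)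
  have expand : ∀ i' j' : Fin d,
      (c • tensorVec u v + s • tensorVec p q) (i', j') = c * (u i' * v j') + s * (p i' * q j') :=
    fun _ _ => rfl
  rw [expand i j, expand k l, expand i l, expand k j] at H
  linear_combination H

/-- The Givens rotation in the plane of orthonormal vectors `a`, `b`. -/
noncomputable def givens {m : Type*} [Fintype m] [DecidableEq m] (a b : m → ℂ) (θ : ℝ) :
    Matrix m m ℂ :=
  1 + ((Real.cos θ : ℂ) - 1) • (vecMulVec a (star a) + vecMulVec b (star b)) +
    (Real.sin θ : ℂ) • (vecMulVec b (star a) - vecMulVec a (star b))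

lemma rot_unitary {m : Type*} [Fintype m] [DecidableEq m] {a b : m → ℂ}
    (ha : star a ⬝ᵥ a = 1) (hb : star b ⬝ᵥ b = 1)
    (hab : star a ⬝ᵥ b = 0) (hba : star b ⬝ᵥ a = 0) (c s : ℂ)
    (hcs : star c = c) (hss : star s = s) (key : c * c + c + c + s * s = 0) :
    1 + c • (vecMulVec a (star a) + vecMulVec b (star b)) +
      s • (vecMulVec b (star a) - vecMulVec a (star b)) ∈ Matrix.unitaryGroup m ℂ := by
  rw [Matrix.mem_unitaryGroup_iff']
  have sA := star_star a
  have sB := star_star b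
  rw [Matrix.star_eq_conjTranspose]
  simp only [conjTranspose_add, conjTranspose_smul, conjTranspose_sub, conjTranspose_one,
    vecMulVec_conjT, sA, sB, hcs, hss]
  simp only [smul_add, smul_sub, add_mul, mul_add, sub_mul, mul_sub, Matrix.smul_mul,
    Matrix.mul_smul, one_mul, mul_one, vecMulVec_mul', ha, hb, hab, hba, one_smul, zero_smul,
    smul_zero, smul_smul]
  trans (1 : Matrix m m ℂ) + (c + c + c * c + s * s) • (vecMulVec a (star a) + vecMulVec b (star b))
  · module
  · rw [show c + c + c * c + s * s = 0 by linear_combination key, zero_smul, add_zero]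

lemma givens_unitary {m : Type*} [Fintype m] [DecidableEq m] {a b : m → ℂ}
    (ha : star a ⬝ᵥ a = 1) (hb : star b ⬝ᵥ b = 1)
    (hab : star a ⬝ᵥ b = 0) (hba : star b ⬝ᵥ a = 0) (θ : ℝ) :
    givens a b θ ∈ Matrix.unitaryGroup m ℂ := by
  rw [givens]
  refine rot_unitary ha hb hab hba _ _ ?_ ?_ ?_
  · simp only [star_sub, star_one, RCLike.star_def, conj_ofReal]
  · simp only [RCLike.star_def, conj_ofReal]
  · have h1 : (Real.cos θ : ℂ)^2 + (Real.sin θ : ℂ)^2 = 1 := by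
      exact_mod_cast congrArg (fun x : ℝ => (x : ℂ)) (Real.cos_sq_add_sin_sq θ)
    linear_combination h1

lemma givens_mulVec {m : Type*} [Fintype m] [DecidableEq m] {a b : m → ℂ}
    (ha : star a ⬝ᵥ a = 1) (hab : star a ⬝ᵥ b = 0) (hba : star b ⬝ᵥ a = 0) (θ : ℝ) :
    givens a b θ *ᵥ a = (Real.cos θ : ℂ) • a + (Real.sin θ : ℂ) • b := by
  rw [givens]
  simp only [Matrix.add_mulVec, Matrix.sub_mulVec, Matrix.smul_mulVec, one_mulVec,
    vecMulVec_mulVec', ha, hba, one_smul, zero_smul, smul_add, smul_sub, smul_zero]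
  module

/-- The imprimitive gates form an open dense subset of `U(d²)`. -/
theorem stmt10 {d : ℕ} (hd : 2 ≤ d) :
    IsOpen {V : Matrix.unitaryGroup (Fin d × Fin d) ℂ |
        ¬ Primitive (V : Matrix (Fin d × Fin d) (Fin d × Fin d) ℂ)} ∧
    Dense {V : Matrix.unitaryGroup (Fin d × Fin d) ℂ |
        ¬ Primitive (V : Matrix (Fin d × Fin d) (Fin d × Fin d) ℂ)} := by
  constructor
  · -- openness: primitivity is a closed condition
    have : {V : Matrix.unitaryGroup (Fin d × Fin d) ℂ |
          ¬ Primitive (V : Matrix (Fin d × Fin d) (Fin d × Fin d) ℂ)} =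
        ⋃ x : Fin d → ℂ, ⋃ y : Fin d → ℂ,
          (fun V : Matrix.unitaryGroup (Fin d × Fin d) ℂ =>
            (V : Matrix (Fin d × Fin d) (Fin d × Fin d) ℂ).mulVec (tensorVec x y)) ⁻¹'
            {z | Decomposable z}ᶜ := by
      ext V
      simp [Primitive, Set.mem_iUnion]
    rw [this]
    exact isOpen_iUnion fun x => isOpen_iUnion fun y =>
      (isClosed_decomposable.isOpen_compl).preimage
        (Continuous.matrix_mulVec continuous_subtype_val continuous_const)
  · -- density
    intro V
    by_cases hV : Primitive (V : Matrix (Fin d × Fin d) (Fin d × Fin d) ℂ)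
    swap
    · exact subset_closure hV
    have h0 : 0 < d := by omega
    set e0 : Fin d → ℂ := Pi.single ⟨0, h0⟩ 1 with he0_def
    have he0 : star e0 ⬝ᵥ e0 = 1 := by
      simp [he0_def, dotProduct, Pi.single_apply, apply_ite, Finset.sum_ite_eq']
    set z : Fin d × Fin d → ℂ := (V : Matrix (Fin d × Fin d) (Fin d × Fin d) ℂ) *ᵥ tensorVec e0 e0
      with hz_def
    have hz1 : star z ⬝ᵥ z = 1 := by
      rw [hz_def, star_mulVec, dotProduct_mulVec, vecMul_vecMul, ← Matrix.star_eq_conjTranspose,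
        (Matrix.mem_unitaryGroup_iff').mp V.2, vecMul_one, star_tensor_dot, he0, one_mul]
    obtain ⟨u, v, huv⟩ := hV e0 e0
    rw [← hz_def] at huv
    have hz1' : (star u ⬝ᵥ u) * (star v ⬝ᵥ v) = 1 := by
      rw [← star_tensor_dot, ← huv]; exact hz1
    have hu : u ≠ 0 := by
      rintro rfl; rw [star_zero, zero_dotProduct, zero_mul] at hz1'; exact one_ne_zero hz1'.symm
    have hv : v ≠ 0 := by
      rintro rfl; rw [star_zero, zero_dotProduct, mul_zero] at hz1'; exact one_ne_zero hz1'.symm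
    obtain ⟨p, hup, hpu, hpp, i₀, k₀, hA⟩ := exists_perp hd u hu
    obtain ⟨q, hvq, hqv, hqq, j₀, l₀, hB⟩ := exists_perp hd v hv
    set b : Fin d × Fin d → ℂ := tensorVec p q with hb_def
    have hbb : star b ⬝ᵥ b = 1 := by rw [hb_def, star_tensor_dot, hpp, hqq, one_mul]
    have hab : star z ⬝ᵥ b = 0 := by rw [huv, hb_def, star_tensor_dot, hup, zero_mul]
    have hba : star b ⬝ᵥ z = 0 := by rw [huv, hb_def, star_tensor_dot, hpu, zero_mul]
    set g : ℝ → Matrix.unitaryGroup (Fin d × Fin d) ℂ := fun θ =>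
      ⟨givens z b θ * (V : Matrix (Fin d × Fin d) (Fin d × Fin d) ℂ),
        mul_mem (givens_unitary hz1 hbb hab hba θ) V.2⟩ with hg_def
    have hg0 : g 0 = V := by
      apply Subtype.ext
      show givens z b 0 * _ = _
      rw [show givens z b 0 = 1 by simp [givens], one_mul]
    have hgcont : Continuous g := by
      apply Continuous.subtype_mk
      apply Continuous.matrix_mul ?_ continuous_const
      exact (continuous_const.add
        (((Complex.continuous_ofReal.comp Real.continuous_cos).sub continuous_const).smul
          continuous_const)).add
        ((Complex.continuous_ofReal.comp Real.continuous_sin).smul continuous_const)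
    have hmem : ∀ θ ∈ Set.Ioo (0:ℝ) (Real.pi/2), g θ ∈
        {V : Matrix.unitaryGroup (Fin d × Fin d) ℂ |
          ¬ Primitive (V : Matrix (Fin d × Fin d) (Fin d × Fin d) ℂ)} := by
      intro θ hθ
      have hcos : 0 < Real.cos θ := Real.cos_pos_of_mem_Ioo
        ⟨by linarith [Real.pi_pos, hθ.1], hθ.2⟩
      have hsin : 0 < Real.sin θ := Real.sin_pos_of_pos_of_lt_pi hθ.1
        (by linarith [Real.pi_pos, hθ.2])
      intro hP
      have key := hP e0 e0
      rw [show ((g θ : Matrix (Fin d × Fin d) (Fin d × Fin d) ℂ)) *ᵥ (tensorVec e0 e0)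
          = givens z b θ *ᵥ z by rw [hz_def]; exact (Matrix.mulVec_mulVec _ _ _).symm] at key
      rw [givens_mulVec hz1 hab hba θ, huv, hb_def] at key
      exact not_decomposable_combo u v p q _ _ (ofReal_ne_zero.mpr hcos.ne')
        (ofReal_ne_zero.mpr hsin.ne') hA hB key
    have htends : Filter.Tendsto g (nhdsWithin 0 (Set.Ioi (0:ℝ))) (nhds V) := by
      rw [← hg0]
      exact (hgcont.continuousAt).mono_left nhdsWithin_le_nhds
    exact mem_closure_of_tendsto htends
      (Filter.eventually_of_mem (Ioo_mem_nhdsGT_of_mem ⟨le_refl 0, by positivity⟩) hmem)
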